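/- Any 2^m consecutive points of the base-2 van der Corput sequence form a (0,m,1)-net in base 2: for every a ∈ ℕ, every m ∈ ℕ, and every integer c with 0 ≤ c < 2^m, there is exactly one index i with 0 ≤ i < 2^m such that φ_2(a+i) ∈ [c/2^m, (c+1)/2^m). -/

import Mathlib

/-- The base-2 radical inverse (van der Corput) function: `n = ∑_j a_j 2^j` with binary
digits `a_j ∈ {0,1}` is mapped to `∑_j a_j 2^{−j−1}`.  (Digits `a_j` with `j ≥ n`
vanish, so summing over `j < n` suffices.) -/
noncomputable def radInv2 (n : ℕ) : ℝ :=
  ∑ j ∈ Finset.range n, if n.testBit j then ((2 : ℝ) ^ (j + 1))⁻¹ else 0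

def bitRev (m n : ℕ) : ℕ := ∑ j ∈ Finset.range m, (n.testBit j).toNat * 2 ^ (m - 1 - j)

lemma bitRev_succ (m n : ℕ) : bitRev (m + 1) n = (n % 2) * 2 ^ m + bitRev m (n / 2) := by
  unfold bitRev
  rw [Finset.sum_range_succ']
  have h0 : (n.testBit 0).toNat = n % 2 := by
    rcases Nat.mod_two_eq_zero_or_one n with h | h <;> simp [Nat.testBit_zero, h]
  rw [add_comm]
  congr 1
  · have hm : m + 1 - 1 - 0 = m := by omega
    rw [hm, h0]
  · apply Finset.sum_congr rfl
    intro j hj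
    simp only [Nat.testBit_succ]
    congr 2
    omega

lemma bitRev_lt (m n : ℕ) : bitRev m n < 2 ^ m := by
  induction m generalizing n with
  | zero => simp [bitRev]
  | succ m ih =>
    rw [bitRev_succ]
    have := ih (n / 2)
    have h2 : n % 2 < 2 := Nat.mod_lt _ (by norm_num)
    have : (n % 2) * 2 ^ m ≤ 1 * 2 ^ m := Nat.mul_le_mul_right _ (by omega)
    calc (n % 2) * 2 ^ m + bitRev m (n / 2) < (n % 2) * 2 ^ m + 2 ^ m := by omega
    _ ≤ 1 * 2 ^ m + 2 ^ m := by omega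
    _ = 2 ^ (m + 1) := by ring

lemma bitRev_inj {m x y : ℕ} (hx : x < 2 ^ m) (hy : y < 2 ^ m)
    (h : bitRev m x = bitRev m y) : x = y := by
  induction m generalizing x y with
  | zero => omega
  | succ m ih =>
    rw [bitRev_succ, bitRev_succ] at h
    have h1 := bitRev_lt m (x / 2)
    have h2 := bitRev_lt m (y / 2)
    have hp : 2 ^ (m + 1) = 2 * 2 ^ m := by ring
    have hm : x % 2 = y % 2 ∧ bitRev m (x / 2) = bitRev m (y / 2) := by
      rcases Nat.mod_two_eq_zero_or_one x with hx' | hx' <;>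
        rcases Nat.mod_two_eq_zero_or_one y with hy' | hy' <;>
        rw [hx', hy'] at h <;>
        simp only [zero_mul, one_mul, zero_add] at h <;> omega
    have hd : x / 2 = y / 2 := ih (by omega) (by omega) hm.2
    omega

lemma bitRev_mod (m n : ℕ) : bitRev m (n % 2 ^ m) = bitRev m n := by
  unfold bitRev
  apply Finset.sum_congr rfl
  intro j hj
  rw [Finset.mem_range] at hj
  rw [Nat.testBit_mod_two_pow]
  simp [hj]

lemma tail_sum (m n : ℕ) :
    ∑ j ∈ Finset.Ico m (n + m), ((2 : ℝ) ^ (j + 1))⁻¹ = ((2:ℝ) ^ m)⁻¹ - ((2:ℝ) ^ (n + m))⁻¹ := by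
  induction n with
  | zero => simp
  | succ n ih =>
    rw [show n + 1 + m = (n + m) + 1 by omega,
      Finset.sum_Ico_succ_top (by omega), ih]
    have h : (2:ℝ) ^ (n + m + 1) = 2 ^ (n + m) * 2 := by ring
    rw [h]
    have : (2:ℝ) ^ (n + m) ≠ 0 := by positivity
    field_simp
    ring

lemma radInv2_decomp (m n : ℕ) :
    radInv2 n = (bitRev m n : ℝ) / 2 ^ m
      + ∑ j ∈ Finset.Ico m (n + m), if n.testBit j then ((2 : ℝ) ^ (j + 1))⁻¹ else 0 := by
  have hfalse : ∀ j, n ≤ j → n.testBit j = false := fun j hj =>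
    Nat.testBit_lt_two_pow (lt_of_lt_of_le (Nat.lt_two_pow_self (n := n))
      (Nat.pow_le_pow_right (by norm_num) hj))
  have hext : radInv2 n
      = ∑ j ∈ Finset.range (n + m), if n.testBit j then ((2 : ℝ) ^ (j + 1))⁻¹ else 0 := by
    unfold radInv2
    apply Finset.sum_subset (Finset.range_subset_range.2 (Nat.le_add_right n m))
    intro j _ hj
    rw [Finset.mem_range, not_lt] at hj
    simp [hfalse j hj]
  rw [hext, Finset.range_eq_Ico,
    ← Finset.sum_Ico_consecutive _ (Nat.zero_le m) (Nat.le_add_left m n), ← Finset.range_eq_Ico]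
  congr 1
  rw [eq_div_iff (by positivity : ((2:ℝ)^m) ≠ 0)]
  unfold bitRev
  push_cast
  rw [Finset.sum_mul]
  apply Finset.sum_congr rfl
  intro j hj
  rw [Finset.mem_range] at hj
  have hpow : ((2:ℝ)^(j+1))⁻¹ * 2 ^ m = 2 ^ (m - 1 - j) := by
    rw [inv_mul_eq_div, div_eq_iff (by positivity : ((2:ℝ)^(j+1)) ≠ 0), ← pow_add]
    congr 1
    omega
  rcases Bool.eq_false_or_eq_true (n.testBit j) with hb | hb <;> simp [hb, hpow]

lemma key (m n c : ℕ) :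
    radInv2 n ∈ Set.Ico ((c : ℝ) / 2 ^ m) (((c : ℝ) + 1) / 2 ^ m) ↔ bitRev m n = c := by
  have hdec := radInv2_decomp m n
  set T := ∑ j ∈ Finset.Ico m (n + m), if n.testBit j then ((2 : ℝ) ^ (j + 1))⁻¹ else 0 with hT
  have hpm : (0:ℝ) < (2:ℝ) ^ m := by positivity
  have hT0 : 0 ≤ T := by
    apply Finset.sum_nonneg
    intro j _
    split
    · positivity
    · exact le_rfl
  have hTlt : T < ((2:ℝ) ^ m)⁻¹ := by
    calc T ≤ ∑ j ∈ Finset.Ico m (n + m), ((2 : ℝ) ^ (j + 1))⁻¹ := by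
            apply Finset.sum_le_sum
            intro j _
            split
            · exact le_rfl
            · positivity
    _ = ((2:ℝ) ^ m)⁻¹ - ((2:ℝ) ^ (n + m))⁻¹ := tail_sum m n
    _ < ((2:ℝ) ^ m)⁻¹ := by
          have : (0:ℝ) < ((2:ℝ) ^ (n + m))⁻¹ := by positivity
          linarith
  have hmul : radInv2 n * 2 ^ m = (bitRev m n : ℝ) + T * 2 ^ m := by
    rw [hdec]; field_simp
  have hS1 : T * 2 ^ m < 1 := by
    have h := mul_lt_mul_of_pos_right hTlt hpm
    rwa [inv_mul_cancel₀ (ne_of_gt hpm)] at h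
  have hS0 : 0 ≤ T * 2 ^ m := mul_nonneg hT0 hpm.le
  constructor
  · rintro ⟨h1, h2⟩
    rw [div_le_iff₀ hpm, hmul] at h1
    rw [lt_div_iff₀ hpm, hmul] at h2
    have hub : bitRev m n < c + 1 := by exact_mod_cast (by push_cast; linarith :
      (bitRev m n : ℝ) < (c : ℝ) + 1)
    have hlb : c < bitRev m n + 1 := by exact_mod_cast (by push_cast; linarith :
      (c : ℝ) < (bitRev m n : ℝ) + 1)
    omega
  · intro h
    constructor
    · rw [div_le_iff₀ hpm, hmul, h]
      linarith
    · rw [lt_div_iff₀ hpm, hmul, h]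
      linarith

/-- Any `2^m` consecutive points of the base-2 van der Corput sequence form a
`(0,m,1)`-net in base 2: for every `a ∈ ℕ`, `m ∈ ℕ` and integer `0 ≤ c < 2^m`, there is
exactly one index `0 ≤ i < 2^m` with `φ₂(a+i) ∈ [c/2^m, (c+1)/2^m)`. -/
theorem vanDerCorput_consecutive_net (a m c : ℕ) (hc : c < 2 ^ m) :
    ∃! i : ℕ, i < 2 ^ m ∧
      radInv2 (a + i) ∈ Set.Ico ((c : ℝ) / 2 ^ m) (((c : ℝ) + 1) / 2 ^ m) := by
  have hpos : 0 < 2 ^ m := Nat.pow_pos (n := m) (by norm_num)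
  have hg : Function.Injective (fun i : Fin (2 ^ m) =>
      (⟨bitRev m (a + i), bitRev_lt m _⟩ : Fin (2 ^ m))) := by
    intro i i' h
    simp only [Fin.mk.injEq] at h
    have h' : bitRev m ((a + i.1) % 2 ^ m) = bitRev m ((a + i'.1) % 2 ^ m) := by
      rw [bitRev_mod, bitRev_mod]; exact h
    have h3 : (a + i.1) % 2 ^ m = (a + i'.1) % 2 ^ m :=
      bitRev_inj (Nat.mod_lt _ hpos) (Nat.mod_lt _ hpos) h'
    have h4 : i.1 % 2 ^ m = i'.1 % 2 ^ m := Nat.ModEq.add_left_cancel' a h3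
    rw [Nat.mod_eq_of_lt i.2, Nat.mod_eq_of_lt i'.2] at h4
    exact Fin.ext h4
  have hsurj : Function.Surjective (fun i : Fin (2 ^ m) =>
      (⟨bitRev m (a + i), bitRev_lt m _⟩ : Fin (2 ^ m))) :=
    Finite.surjective_of_injective hg
  obtain ⟨i, hi⟩ := hsurj ⟨c, hc⟩
  simp only [Fin.mk.injEq] at hi
  refine ⟨i, ⟨i.2, (key m (a + i) c).mpr hi⟩, ?_⟩
  rintro j ⟨hj, hjmem⟩
  have hbc : bitRev m (a + j) = c := (key m (a + j) c).mp hjmem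
  have := hg (a₁ := ⟨j, hj⟩) (a₂ := i) (by simp only [Fin.mk.injEq]; rw [hbc, hi])
  simpa using congrArg Fin.val this
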